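/- For all real numbers b₁, b₂ and every real exponent γ > 3, there exists a constant c > 0 (depending only on γ) such that ||b₁ + b₂|^γ − |b₁|^γ − γ|b₁|^{γ−2} b₁ b₂ − (1/2)γ(γ−1)|b₁|^{γ−2} b₂²| ≤ c(|b₁|^{γ−3}|b₂|³ + |b₂|^γ). -/

import Mathlib

open Real Filter Set

lemma myHD_mul {q : ℝ} (hq : 1 < q) (x : ℝ) :
    HasDerivAt (fun y : ℝ => |y| ^ q * y) ((q + 1) * |x| ^ q) x := by
  have h := (hasDerivAt_abs_rpow x hq).mul (hasDerivAt_id x)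
  refine h.congr_deriv ?_
  show q * |x| ^ (q - 2) * x * id x + |x| ^ q * 1 = (q + 1) * |x| ^ q
  simp only [id]
  rcases eq_or_ne x 0 with rfl | hx
  · simp [Real.zero_rpow (show q ≠ 0 by linarith)]
  · have h2 : |x| ^ (q - 2) * (x * x) = |x| ^ q := by
      rw [← abs_mul_abs_self x, ← mul_assoc, ← Real.rpow_add_one (abs_ne_zero.2 hx),
        ← Real.rpow_add_one (abs_ne_zero.2 hx)]
      congr 1; ring
    linear_combination q * h2

lemma myBound {q : ℝ} (x : ℝ) : |(|x| ^ (q - 2) * x)| ≤ |x| ^ (q - 1) := by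
  rcases eq_or_ne x 0 with rfl | hx
  · simp [Real.rpow_nonneg]
  · rw [abs_mul, abs_of_nonneg (Real.rpow_nonneg (abs_nonneg x) _),
      ← Real.rpow_add_one (abs_ne_zero.2 hx)]
    apply le_of_eq
    congr 1; ring

theorem stmt_1 (γ : ℝ) (hγ : 3 < γ) :
    ∃ c : ℝ, 0 < c ∧ ∀ b₁ b₂ : ℝ,
      abs (|b₁ + b₂| ^ γ - |b₁| ^ γ - γ * |b₁| ^ (γ - 2) * b₁ * b₂
        - (1 / 2) * γ * (γ - 1) * |b₁| ^ (γ - 2) * b₂ ^ 2)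
        ≤ c * (|b₁| ^ (γ - 3) * |b₂| ^ (3 : ℝ) + |b₂| ^ γ) := by
  have h1 : (1:ℝ) < γ := by linarith
  have h2 : (1:ℝ) < γ - 2 := by linarith
  have hKpos : 0 < γ * (γ - 1) * (γ - 2) := by
    apply mul_pos (mul_pos (by linarith) (by linarith)) (by linarith)
  refine ⟨γ * (γ - 1) * (γ - 2) * 2 ^ (γ - 3), by
    exact mul_pos hKpos (Real.rpow_pos_of_pos two_pos _), fun b₁ b₂ => ?_⟩
  rcases eq_or_ne b₂ 0 with rfl | hb₂
  · simp [Real.zero_rpow (show γ ≠ 0 by linarith),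
      Real.zero_rpow (show (3:ℝ) ≠ 0 by norm_num)]
  set M := |b₁| + |b₂| with hMdef
  have hb₂' : 0 < |b₂| := abs_pos.2 hb₂
  have hMpos : 0 < M := by positivity
  have hline : ∀ t : ℝ, HasDerivAt (fun s : ℝ => b₁ + s * b₂) b₂ t := by
    intro t
    have := ((hasDerivAt_id t).mul_const b₂).const_add b₁
    simpa using this
  have hu : ∀ t ∈ Icc (0:ℝ) 1, |b₁ + t * b₂| ≤ M := by
    intro t ht
    calc |b₁ + t * b₂| ≤ |b₁| + |t * b₂| := abs_add_le _ _
    _ ≤ |b₁| + |b₂| := by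
        rw [abs_mul]
        have : |t| ≤ 1 := by rw [abs_of_nonneg ht.1]; exact ht.2
        nlinarith [abs_nonneg b₂]
  -- Step 1: bound on the variation of the second derivative
  set C1 := γ * (γ - 1) * (γ - 2) * M ^ (γ - 3) * |b₂| with hC1
  have step1 : ∀ t ∈ Icc (0:ℝ) 1,
      |γ * (γ-1) * |b₁ + t * b₂| ^ (γ-2) - γ * (γ-1) * |b₁| ^ (γ-2)| ≤ C1 := by
    have h := norm_image_sub_le_of_norm_deriv_le_segment'
      (f := fun t : ℝ => γ * (γ-1) * |b₁ + t * b₂| ^ (γ-2))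
      (C := C1)
      (f' := fun t : ℝ => γ * (γ-1) * ((γ-2) * |b₁ + t * b₂| ^ (γ-2-2) * (b₁ + t * b₂)) * b₂)
      (a := 0) (b := 1) ?_ ?_
    · intro t ht
      have := h t ht
      simp only [zero_mul, add_zero, sub_zero] at this
      refine this.trans ?_
      have hC1nn : 0 ≤ C1 := by positivity
      nlinarith [ht.1, ht.2]
    · intro t ht
      have hc := (hasDerivAt_abs_rpow (b₁ + t * b₂) h2).const_mul (γ * (γ-1))
      have hcc := hc.comp t (hline t)
      exact hcc.hasDerivWithinAt
    · intro t ht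
      have ht' : t ∈ Icc (0:ℝ) 1 := ⟨ht.1, ht.2.le⟩
      set u := b₁ + t * b₂ with hu'
      show |γ * (γ-1) * ((γ-2) * |u| ^ (γ-2-2) * u) * b₂| ≤ C1
      have e4 : γ * (γ-1) * ((γ-2) * |u| ^ (γ-2-2) * u) * b₂
          = (γ * (γ-1) * (γ-2)) * ((|u| ^ (γ-2-2) * u) * b₂) := by ring
      rw [e4, abs_mul (γ * (γ-1) * (γ-2)) _, abs_of_pos hKpos,
        abs_mul (|u| ^ (γ-2-2) * u) b₂]
      have hb : |(|u| ^ (γ-2-2) * u)| ≤ |u| ^ (γ-3) := by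
        have := myBound (q := γ-2) u
        have e3 : γ - 2 - 1 = γ - 3 := by ring
        rwa [e3] at this
      have hb2 : |u| ^ (γ-3) ≤ M ^ (γ-3) :=
        Real.rpow_le_rpow (abs_nonneg u) (hu t ht') (by linarith)
      calc γ * (γ-1) * (γ-2) * (|(|u| ^ (γ-2-2) * u)| * |b₂|)
          ≤ γ * (γ-1) * (γ-2) * (M ^ (γ-3) * |b₂|) := by
            apply mul_le_mul_of_nonneg_left _ hKpos.le
            exact mul_le_mul_of_nonneg_right (hb.trans hb2) (abs_nonneg b₂)
      _ = C1 := by rw [hC1]; ring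
  -- Step 2: bound the first-order error φ
  set C2 := C1 * b₂ ^ 2 with hC2
  have hφ : ∀ t : ℝ, HasDerivAt
      (fun t : ℝ => γ * (|b₁ + t * b₂| ^ (γ-2) * (b₁ + t * b₂)) * b₂
        - γ * (|b₁| ^ (γ-2) * b₁) * b₂ - γ * (γ-1) * |b₁| ^ (γ-2) * b₂ ^ 2 * t)
      ((γ * (γ-1) * |b₁ + t * b₂| ^ (γ-2) - γ * (γ-1) * |b₁| ^ (γ-2)) * b₂ ^ 2) t := by
    intro t
    have A : HasDerivAt (fun s : ℝ => γ * (|b₁ + s * b₂| ^ (γ-2) * (b₁ + s * b₂)))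
        ((γ * (((γ-2) + 1) * |b₁ + t * b₂| ^ (γ-2))) * b₂) t :=
      by have hcc := ((myHD_mul h2 (b₁ + t * b₂)).const_mul γ).comp t (hline t); exact hcc
    have B := ((A.mul_const b₂).sub_const (γ * (|b₁| ^ (γ-2) * b₁) * b₂)).sub
      ((hasDerivAt_id t).const_mul (γ * (γ-1) * |b₁| ^ (γ-2) * b₂ ^ 2))
    exact B.congr_deriv (by ring)
  have step2 : ∀ t ∈ Icc (0:ℝ) 1,
      |γ * (|b₁ + t * b₂| ^ (γ-2) * (b₁ + t * b₂)) * b₂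
        - γ * (|b₁| ^ (γ-2) * b₁) * b₂ - γ * (γ-1) * |b₁| ^ (γ-2) * b₂ ^ 2 * t| ≤ C2 := by
    have h := norm_image_sub_le_of_norm_deriv_le_segment'
      (f := fun t : ℝ => γ * (|b₁ + t * b₂| ^ (γ-2) * (b₁ + t * b₂)) * b₂
        - γ * (|b₁| ^ (γ-2) * b₁) * b₂ - γ * (γ-1) * |b₁| ^ (γ-2) * b₂ ^ 2 * t)
      (C := C2)
      (f' := fun t : ℝ => (γ * (γ-1) * |b₁ + t * b₂| ^ (γ-2) - γ * (γ-1) * |b₁| ^ (γ-2)) * b₂ ^ 2)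
      (a := 0) (b := 1) (fun t ht => (hφ t).hasDerivWithinAt) ?_
    · intro t ht
      have := h t ht
      simp only [zero_mul, add_zero, mul_zero, sub_zero] at this
      have hC2nn : 0 ≤ C2 := by rw [hC2, hC1]; positivity
      simp only [sub_self, sub_zero] at this
      rw [Real.norm_eq_abs] at this
      refine this.trans ?_
      nlinarith [ht.1, ht.2]
    · intro t ht
      have ht' : t ∈ Icc (0:ℝ) 1 := ⟨ht.1, ht.2.le⟩
      rw [Real.norm_eq_abs, abs_mul, hC2]
      have := step1 t ht'
      have h0 : (0:ℝ) ≤ |b₂ ^ 2| := abs_nonneg _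
      have e1 : |b₂ ^ 2| = b₂ ^ 2 := abs_of_nonneg (sq_nonneg _)
      rw [e1]
      have hC1nn : 0 ≤ C1 := by rw [hC1]; positivity
      nlinarith [abs_nonneg (γ * (γ-1) * |b₁ + t * b₂| ^ (γ-2) - γ * (γ-1) * |b₁| ^ (γ-2)),
        sq_nonneg b₂]
  -- Step 3: bound the second-order error E
  have hE : ∀ t : ℝ, HasDerivAt
      (fun t : ℝ => |b₁ + t * b₂| ^ γ - γ * (|b₁| ^ (γ-2) * b₁) * b₂ * t
        - γ * (γ-1) * |b₁| ^ (γ-2) * b₂ ^ 2 * (t ^ 2 / 2))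
      (γ * (|b₁ + t * b₂| ^ (γ-2) * (b₁ + t * b₂)) * b₂
        - γ * (|b₁| ^ (γ-2) * b₁) * b₂ - γ * (γ-1) * |b₁| ^ (γ-2) * b₂ ^ 2 * t) t := by
    intro t
    have A : HasDerivAt (fun s : ℝ => |b₁ + s * b₂| ^ γ)
        ((γ * |b₁ + t * b₂| ^ (γ-2) * (b₁ + t * b₂)) * b₂) t :=
      by have hcc := (hasDerivAt_abs_rpow (b₁ + t * b₂) h1).comp t (hline t); exact hcc
    have B := (A.sub ((hasDerivAt_id t).const_mul (γ * (|b₁| ^ (γ-2) * b₁) * b₂))).sub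
      (((hasDerivAt_pow 2 t).div_const 2).const_mul (γ * (γ-1) * |b₁| ^ (γ-2) * b₂ ^ 2))
    exact B.congr_deriv (by push_cast; ring)
  have step3 : |(|b₁ + 1 * b₂| ^ γ - γ * (|b₁| ^ (γ-2) * b₁) * b₂ * 1
        - γ * (γ-1) * |b₁| ^ (γ-2) * b₂ ^ 2 * (1 ^ 2 / 2))
      - (|b₁ + 0 * b₂| ^ γ - γ * (|b₁| ^ (γ-2) * b₁) * b₂ * 0
        - γ * (γ-1) * |b₁| ^ (γ-2) * b₂ ^ 2 * (0 ^ 2 / 2))| ≤ C2 * (1 - 0) :=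
    norm_image_sub_le_of_norm_deriv_le_segment'
      (f' := fun t : ℝ => γ * (|b₁ + t * b₂| ^ (γ-2) * (b₁ + t * b₂)) * b₂
        - γ * (|b₁| ^ (γ-2) * b₁) * b₂ - γ * (γ-1) * |b₁| ^ (γ-2) * b₂ ^ 2 * t)
      (fun t ht => (hE t).hasDerivWithinAt)
      (fun t ht => step2 t ⟨ht.1, ht.2.le⟩) 1 (right_mem_Icc.2 zero_le_one)
  simp only [one_mul, zero_mul, add_zero, mul_zero, mul_one, one_pow, zero_pow] at step3
  norm_num at step3
  -- assemble
  have hgoal : |b₁ + b₂| ^ γ - |b₁| ^ γ - γ * |b₁| ^ (γ - 2) * b₁ * b₂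
        - 1 / 2 * γ * (γ - 1) * |b₁| ^ (γ - 2) * b₂ ^ 2
      = (|b₁ + b₂| ^ γ - γ * (|b₁| ^ (γ-2) * b₁) * b₂
        - γ * (γ-1) * |b₁| ^ (γ-2) * b₂ ^ 2 * (1 / 2)) - |b₁| ^ γ := by ring
  rw [hgoal]
  refine step3.trans ?_
  -- final algebraic estimate
  have hmax : (max |b₁| |b₂|) ^ (γ-3) ≤ |b₁| ^ (γ-3) + |b₂| ^ (γ-3) := by
    rcases le_total |b₁| |b₂| with h | h
    · rw [max_eq_right h]
      have := Real.rpow_nonneg (abs_nonneg b₁) (γ-3); linarith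
    · rw [max_eq_left h]
      have := Real.rpow_nonneg (abs_nonneg b₂) (γ-3); linarith
  have hM2 : M ^ (γ-3) ≤ 2 ^ (γ-3) * (|b₁| ^ (γ-3) + |b₂| ^ (γ-3)) := by
    have hm : M ≤ 2 * max |b₁| |b₂| := by
      rcases le_total |b₁| |b₂| with h | h
      · rw [max_eq_right h, hMdef]; linarith
      · rw [max_eq_left h, hMdef]; linarith
    calc M ^ (γ-3) ≤ (2 * max |b₁| |b₂|) ^ (γ-3) :=
          Real.rpow_le_rpow hMpos.le hm (by linarith)
    _ = 2 ^ (γ-3) * (max |b₁| |b₂|) ^ (γ-3) :=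
          Real.mul_rpow (by norm_num) (le_max_of_le_left (abs_nonneg b₁))
    _ ≤ 2 ^ (γ-3) * (|b₁| ^ (γ-3) + |b₂| ^ (γ-3)) := by
          have := Real.rpow_pos_of_pos (show (0:ℝ) < 2 by norm_num) (γ-3)
          nlinarith
  have e1 : |b₂| * b₂ ^ 2 = |b₂| ^ (3:ℝ) := by
    have : |b₂| ^ (3:ℝ) = |b₂| ^ (3:ℕ) := by
      rw [← Real.rpow_natCast]; norm_num
    rw [this, ← sq_abs]; ring
  have e2 : |b₂| ^ (γ-3) * |b₂| ^ (3:ℝ) = |b₂| ^ γ := by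
    rw [← Real.rpow_add hb₂']; norm_num
  set K := γ * (γ - 1) * (γ - 2) with hK
  calc C2 = K * M ^ (γ-3) * (|b₂| * b₂ ^ 2) := by rw [hC2, hC1, hK]; ring
  _ ≤ K * (2 ^ (γ-3) * (|b₁| ^ (γ-3) + |b₂| ^ (γ-3))) * (|b₂| * b₂ ^ 2) := by
      have hnn : 0 ≤ |b₂| * b₂ ^ 2 := by positivity
      exact mul_le_mul_of_nonneg_right (mul_le_mul_of_nonneg_left hM2 hKpos.le) hnn
  _ = K * 2 ^ (γ-3) * (|b₁| ^ (γ-3) * (|b₂| * b₂ ^ 2) + |b₂| ^ (γ-3) * (|b₂| * b₂ ^ 2)) := by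
      ring
  _ = K * 2 ^ (γ-3) * (|b₁| ^ (γ-3) * |b₂| ^ (3:ℝ) + |b₂| ^ (γ-3) * |b₂| ^ (3:ℝ)) := by
      rw [e1]
  _ = K * 2 ^ (γ-3) * (|b₁| ^ (γ-3) * |b₂| ^ (3:ℝ) + |b₂| ^ γ) := by rw [e2]
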